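/- Let d ≥ 1 and N ≥ 2 be integers and let q be a power of two satisfying q ≥ d + 2, q ≥ 8, and (q/2)·ln(q/2) ≥ (d·ln N)/2. Then there exists a d-disjunct binary matrix with q(q−1) rows and N columns. -/

import Mathlib

/-- A `t × N` binary matrix `M` is `d`-disjunct if for every column index `j` and every
set `T` of at most `d` column indices with `j ∉ T`, there is a row `i` with `M i j = 1`
and `M i j' = 0` for all `j' ∈ T`. -/
def Disjunct {t N : ℕ} (d : ℕ) (M : Fin t → Fin N → Bool) : Prop :=
  ∀ j : Fin N, ∀ T : Finset (Fin N), T.card ≤ d → j ∉ T →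
    ∃ i : Fin t, M i j = true ∧ ∀ j' ∈ T, M i j' = false

open Polynomial

noncomputable def polyOf {F : Type*} [Semiring F] {m : ℕ} (c : Fin m → F) : F[X] :=
  ∑ i : Fin m, monomial (i : ℕ) (c i)

lemma polyOf_coeff {F : Type*} [Semiring F] {m : ℕ} (c : Fin m → F) (i : Fin m) :
    (polyOf c).coeff (i : ℕ) = c i := by
  classical
  rw [polyOf, finset_sum_coeff, Finset.sum_eq_single i]
  · simp [coeff_monomial]
  · intro b _ hb
    rw [coeff_monomial, if_neg (by simpa [Fin.val_inj] using hb)]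
  · simp

lemma polyOf_degree_lt {F : Type*} [Semiring F] {m : ℕ} (c : Fin m → F) :
    (polyOf c).degree < (m : WithBot ℕ) := by
  apply lt_of_le_of_lt (degree_sum_le _ _)
  rw [Finset.sup_lt_iff (by exact_mod_cast WithBot.bot_lt_coe m)]
  intro i _
  exact lt_of_le_of_lt (degree_monomial_le _ _) (by exact_mod_cast i.isLt)

-- core combinatorial lemma over a finite field
lemma core {F : Type*} [Field F] [Fintype F] [DecidableEq F]
    (d N m t : ℕ) (hm : 1 ≤ m)
    (α : Fin t ↪ F) (ι : Fin N ↪ (Fin m → F))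
    (hcount : d * (m - 1) < t) :
    ∀ j : Fin N, ∀ T : Finset (Fin N), T.card ≤ d → j ∉ T →
      ∃ i : Fin t × F, (polyOf (ι j)).eval (α i.1) = i.2 ∧
        ∀ j' ∈ T, ¬ ((polyOf (ι j')).eval (α i.1) = i.2) := by
  intro j T hTd hjT
  set p := polyOf (ι j) with hp
  set A : Finset (Fin t) := T.biUnion (fun j' =>
    Finset.univ.filter (fun s => (polyOf (ι j')).eval (α s) = p.eval (α s))) with hA
  have hcardA : A.card ≤ d * (m - 1) := by
    refine le_trans (Finset.card_biUnion_le) ?_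
    refine le_trans (Finset.sum_le_card_nsmul T _ (m - 1) ?_) ?_
    · intro j' hj'
      -- the agreement set has size ≤ m - 1
      have hne : (ι j) ≠ (ι j') := fun h => hjT (by
        have : j = j' := ι.injective h
        rwa [this])
      obtain ⟨io, hio⟩ := Function.ne_iff.1 hne
      set g : F[X] := p - polyOf (ι j') with hg
      have hg0 : g ≠ 0 := by
        intro h
        apply hio
        have := congrArg (fun r => Polynomial.coeff r (io : ℕ)) h
        simp only [hg, hp, coeff_sub, coeff_zero, polyOf_coeff] at this
        exact sub_eq_zero.1 this
      have hdeg : g.natDegree ≤ m - 1 := by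
        have hlt : g.degree < (m : WithBot ℕ) := by
          apply lt_of_le_of_lt (degree_sub_le _ _)
          exact max_lt (polyOf_degree_lt _) (polyOf_degree_lt _)
        have := (natDegree_lt_iff_degree_lt hg0).2 hlt
        omega
      refine le_trans (Finset.card_le_card_of_injOn (t := g.roots.toFinset) α ?_ ?_) ?_
      · intro s hs
        simp only [Finset.coe_filter, Finset.mem_coe, Finset.mem_filter, Finset.mem_univ, true_and, Set.mem_setOf_eq] at hs
        exact Multiset.mem_toFinset.2 ((mem_roots hg0).2 (by
          simp [hg, IsRoot, eval_sub, sub_eq_zero, hs]))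
      · exact α.injective.injOn
      · exact le_trans (Multiset.toFinset_card_le _) (le_trans (card_roots' g) hdeg)
    · simpa [smul_eq_mul] using Nat.mul_le_mul_right (m - 1) hTd
  have : ∃ s : Fin t, s ∉ A := by
    by_contra h
    push_neg at h
    have : A = Finset.univ := Finset.eq_univ_iff_forall.2 h
    rw [this, Finset.card_univ, Fintype.card_fin] at hcardA
    omega
  obtain ⟨s, hs⟩ := this
  refine ⟨(s, p.eval (α s)), rfl, ?_⟩
  intro j' hj' hcontra
  exact hs (Finset.mem_biUnion.2 ⟨j', hj', by
    simp only [Finset.mem_filter, Finset.mem_univ, true_and]; exact hcontra⟩)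


lemma two_mul_le_two_pow {k : ℕ} (hk : 1 ≤ k) : 2 * k ≤ 2 ^ k := by
  have h1 : k - 1 < 2 ^ (k - 1) := Nat.lt_two_pow_self
  have h2 : k ≤ 2 ^ (k - 1) := by omega
  calc 2 * k ≤ 2 * 2 ^ (k - 1) := by omega
    _ = 2 ^ k := by rw [← pow_succ']; congr 1; omega

lemma log_chain (d N q k m : ℕ) (hd : 1 ≤ d) (hN : 2 ≤ N) (hk : q = 2 ^ k)
    (hk3 : 3 ≤ k) (hq8 : 8 ≤ q) (hmd : q - 2 ≤ m * d)
    (hlog : (d : ℝ) * Real.log N / 2 ≤ ((q : ℝ) / 2) * Real.log ((q : ℝ) / 2)) :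
    N ≤ q ^ m := by
  have hq2 : 2 ≤ q := by omega
  have hq0 : (0:ℝ) < q := by positivity
  have hd0 : (0:ℝ) < d := by exact_mod_cast hd
  have hl2 : (0:ℝ) < Real.log 2 := Real.log_pos (by norm_num)
  have hqc : (q:ℝ) = 2 ^ k := by rw [hk]; push_cast; ring
  have hlq : Real.log q = k * Real.log 2 := by rw [hqc, Real.log_pow]
  have hlq2 : Real.log ((q:ℝ)/2) = ((k:ℝ) - 1) * Real.log 2 := by
    rw [Real.log_div (by positivity) (by norm_num), hlq]; ring
  -- nat inequality q*(k-1) ≤ (q-2)*k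
  have h2k : 2 * k ≤ q := by rw [hk]; exact two_mul_le_two_pow (by omega)
  have hnat : q * (k - 1) ≤ (q - 2) * k := by
    rw [Nat.mul_sub, Nat.sub_mul]
    have : 2 * k ≤ q * k := Nat.mul_le_mul_right k hq2
    omega
  have hnatR : (q:ℝ) * ((k:ℝ) - 1) ≤ ((q:ℝ) - 2) * k := by
    have := (Nat.cast_le (α := ℝ)).2 hnat
    push_cast [Nat.cast_sub (by omega : 1 ≤ k), Nat.cast_sub (by omega : 2 ≤ q)] at this
    convert this using 2
  have hmdR : (q:ℝ) - 2 ≤ (m:ℝ) * d := by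
    have := (Nat.cast_le (α := ℝ)).2 hmd
    push_cast [Nat.cast_sub (by omega : 2 ≤ q)] at this
    linarith
  have hk0 : (0:ℝ) ≤ (k:ℝ) := by positivity
  have step : (d:ℝ) * Real.log N ≤ (d:ℝ) * ((m:ℝ) * Real.log q) := by
    have h1 : (d:ℝ) * Real.log N ≤ (q:ℝ) * (((k:ℝ) - 1) * Real.log 2) := by
      rw [hlq2] at hlog; linarith
    have h2 : (q:ℝ) * (((k:ℝ) - 1) * Real.log 2) ≤ (((q:ℝ) - 2) * k) * Real.log 2 := by
      nlinarith
    have h3 : (((q:ℝ) - 2) * k) * Real.log 2 ≤ ((m:ℝ) * d * k) * Real.log 2 := by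
      have := mul_le_mul_of_nonneg_right hmdR
        (show (0:ℝ) ≤ (k:ℝ) * Real.log 2 by positivity)
      nlinarith [this]
    rw [hlq]; nlinarith
  have hlogN : Real.log N ≤ Real.log ((q:ℝ) ^ m) := by
    rw [Real.log_pow]
    have := (mul_le_mul_iff_right₀ hd0).1 step
    linarith
  have : (N:ℝ) ≤ (q:ℝ) ^ m := by
    rwa [Real.log_le_log_iff (by positivity) (by positivity)] at hlogN
  exact_mod_cast this

/-- Let `d ≥ 1`, `N ≥ 2` and let `q` be a power of two with
`q ≥ d + 2`, `q ≥ 8` and `(q/2)·ln(q/2) ≥ (d·ln N)/2`.  Then there exists a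
`d`-disjunct binary matrix with `q(q-1)` rows and `N` columns. -/
theorem stmt2 (d N q : ℕ) (hd : 1 ≤ d) (hN : 2 ≤ N) (hq : ∃ k : ℕ, q = 2 ^ k)
    (hqd : d + 2 ≤ q) (hq8 : 8 ≤ q)
    (hlog : (d : ℝ) * Real.log N / 2 ≤ ((q : ℝ) / 2) * Real.log ((q : ℝ) / 2)) :
    ∃ M : Fin (q * (q - 1)) → Fin N → Bool, Disjunct d M := by
  classical
  obtain ⟨k, hk⟩ := hq
  have hk3 : 3 ≤ k := by
    by_contra h
    interval_cases k <;> omega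
  haveI : Fact (Nat.Prime 2) := ⟨Nat.prime_two⟩
  set F := GaloisField 2 k with hF
  have hcardN : Nat.card F = q := by rw [GaloisField.card 2 k (by omega), hk]
  haveI : Finite F := Nat.finite_of_card_ne_zero (by omega)
  letI : Fintype F := Fintype.ofFinite F
  have hcard : Fintype.card F = q := by rw [← Nat.card_eq_fintype_card, hcardN]
  set m : ℕ := (q - 3) / d + 1 with hm
  have hd0 : 0 < d := hd
  have hmd : q - 2 ≤ m * d := by
    have h1 : d * ((q - 3) / d) + (q - 3) % d = q - 3 := Nat.div_add_mod _ _
    have h2 : (q - 3) % d < d := Nat.mod_lt _ hd0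
    have h3 : m * d = d * ((q - 3) / d) + d := by rw [hm]; ring
    omega
  have hdm1 : d * (m - 1) ≤ q - 3 := by
    have : (q - 3) / d * d ≤ q - 3 := Nat.div_mul_le_self _ _
    have h3 : d * (m - 1) = (q - 3) / d * d := by rw [hm]; simp [mul_comm]
    omega
  have hNq : N ≤ q ^ m := log_chain d N q k m hd hN hk hk3 hq8 hmd hlog
  -- embeddings
  obtain ⟨α⟩ : Nonempty (Fin (q - 1) ↪ F) :=
    Function.Embedding.nonempty_of_card_le (by simp only [Fintype.card_fin, hcard]; omega)
  obtain ⟨ι⟩ : Nonempty (Fin N ↪ (Fin m → F)) :=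
    Function.Embedding.nonempty_of_card_le (by
      simp [Fintype.card_fun, hcard]; exact hNq)
  have hcount : d * (m - 1) < q - 1 := by omega
  set e : Fin (q * (q - 1)) ≃ Fin (q - 1) × F :=
    Fintype.equivOfCardEq (by simp [hcard, mul_comm]) with he
  refine ⟨fun i j => decide ((polyOf (ι j)).eval (α (e i).1) = (e i).2), ?_⟩
  intro j T hTd hjT
  obtain ⟨i, hi1, hi2⟩ := core d N m (q - 1) (Nat.le_add_left 1 _) α ι hcount j T hTd hjT
  refine ⟨e.symm i, ?_, ?_⟩
  · simp [e.apply_symm_apply, hi1]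
  · intro j' hj'
    simp [e.apply_symm_apply]
    exact hi2 j' hj'
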